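/- arXiv:1711.02291 — 2 statements merged into one kernel-verified Lean document; each statement's English description precedes it below -/
import Mathlib

section
/- Let U be a d×d unitary matrix, let D_{B'}(X) = ∑_i (U P_i U†) X (U P_i U†) be the dephasing superoperator of the rotated basis, and let X_U be the d×d real matrix with entries (X_U)_{ij} = |⟨i|U|j⟩|². Then ∑_{i=1}^d ( ⟨D_{B'}(P_i), D_{B'}(P_i)⟩ − ⟨D_B(D_{B'}(P_i)), D_B(D_{B'}(P_i))⟩ ) = Tr[ X_U X_Uᵀ ( I − X_U X_Uᵀ ) ]; in particular, the 2-norm coherence generating power of the maximally dephasing channel D_{B'} with respect to B equals (1/(d(d+1))) · Tr[ X_U X_Uᵀ ( I − X_U X_Uᵀ ) ]. -/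
open Matrix BigOperators

/-- The rank-one projector `|v i⟩⟨v i|`. -/
noncomputable def rankOneProj {d : ℕ} (v : Fin d → (Fin d → ℂ)) (i : Fin d) :
    Matrix (Fin d) (Fin d) ℂ :=
  Matrix.vecMulVec (v i) (star (v i))

lemma vmv_mul_vmv {d : ℕ} (a b c e : Fin d → ℂ) :
    vecMulVec a b * vecMulVec c e = (b ⬝ᵥ c) • vecMulVec a e := by
  ext i j
  simp [Matrix.mul_apply, vecMulVec_apply, dotProduct, Finset.sum_mul, Finset.mul_sum]
  exact Finset.sum_congr rfl fun k _ => by ring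

lemma trace_vmv {d : ℕ} (a b : Fin d → ℂ) : (vecMulVec a b).trace = b ⬝ᵥ a := by
  simp [Matrix.trace, Matrix.diag, vecMulVec_apply, dotProduct, mul_comm]

lemma vmv_mulVec {d : ℕ} (a b : Fin d → ℂ) (x : Fin d → ℂ) :
    vecMulVec a b *ᵥ x = (b ⬝ᵥ x) • a := by
  ext i
  simp [mulVec, vecMulVec_apply, dotProduct, Finset.sum_mul, Finset.mul_sum]
  exact Finset.sum_congr rfl fun k _ => by ring

lemma vmv_conjT {d : ℕ} (a b : Fin d → ℂ) :
    (vecMulVec a b)ᴴ = vecMulVec (star b) (star a) := by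
  ext i j; simp [vecMulVec_apply, conjTranspose_apply, mul_comm]

lemma sandwich {d : ℕ} (u : Fin d → ℂ) (A : Matrix (Fin d) (Fin d) ℂ) :
    vecMulVec u (star u) * A * vecMulVec u (star u)
      = (star u ⬝ᵥ (A *ᵥ u)) • vecMulVec u (star u) := by
  ext i j
  simp [Matrix.mul_apply, vecMulVec_apply, dotProduct, mulVec, Finset.sum_mul, Finset.mul_sum]
  rw [Finset.sum_comm]
  exact Finset.sum_congr rfl fun k _ => Finset.sum_congr rfl fun l _ => by ring

/-- norm² of a real combination of orthonormal rank-one projectors. -/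
lemma hnorm {d : ℕ} (u : Fin d → (Fin d → ℂ))
    (hu : ∀ i j, star (u i) ⬝ᵥ u j = if i = j then 1 else 0) (c : Fin d → ℝ) :
    ((∑ j, (c j : ℂ) • rankOneProj u j)ᴴ * ∑ j, (c j : ℂ) • rankOneProj u j).trace
      = ((∑ j, (c j) ^ 2 : ℝ) : ℂ) := by
  have hQH : ∀ j, (rankOneProj u j)ᴴ = rankOneProj u j := by
    intro j; rw [rankOneProj, vmv_conjT, star_star]
  rw [conjTranspose_sum]
  simp only [conjTranspose_smul, hQH, Complex.star_def, Complex.conj_ofReal]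
  rw [Finset.sum_mul_sum]
  simp only [trace_sum]
  have hterm : ∀ j k, (((c j : ℂ) • rankOneProj u j) * ((c k : ℂ) • rankOneProj u k)).trace
      = if j = k then ((c j : ℂ) * c k) else 0 := by
    intro j k
    rw [smul_mul_assoc, mul_smul_comm, rankOneProj, rankOneProj, vmv_mul_vmv, hu j k]
    rcases eq_or_ne j k with h | h
    · subst h
      simp [trace_smul, trace_vmv, hu j j, dotProduct_comm (u j)]
    · simp [h]
  calc (∑ j, ∑ k, (((c j : ℂ) • rankOneProj u j) * ((c k : ℂ) • rankOneProj u k)).trace)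
      = ∑ j, ∑ k, if j = k then ((c j : ℂ) * c k) else 0 := by
        exact Finset.sum_congr rfl fun j _ => Finset.sum_congr rfl fun k _ => hterm j k
    _ = ∑ j, ((c j : ℂ) * c j) := by
        refine Finset.sum_congr rfl fun j _ => ?_
        simp
    _ = ((∑ j, (c j) ^ 2 : ℝ) : ℂ) := by
        push_cast
        exact Finset.sum_congr rfl fun j _ => by ring

lemma sum_mulVec' {d : ℕ} (A : Fin d → Matrix (Fin d) (Fin d) ℂ) (x : Fin d → ℂ) :
    (∑ j, A j) *ᵥ x = ∑ j, A j *ᵥ x := by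
  ext i
  simp [mulVec, dotProduct, Finset.sum_apply, Finset.sum_mul, Matrix.sum_apply]
  rw [Finset.sum_comm]

lemma dotProduct_sum' {d : ℕ} (x : Fin d → ℂ) (y : Fin d → (Fin d → ℂ)) :
    x ⬝ᵥ (∑ j, y j) = ∑ j, x ⬝ᵥ y j := by
  simp [dotProduct, Finset.mul_sum, Finset.sum_apply]
  rw [Finset.sum_comm]

/-- The dephasing superoperator `D_B(X) = ∑ i, P_i X P_i`, `P_i = |v i⟩⟨v i|`. -/
noncomputable def dephase {d : ℕ} (v : Fin d → (Fin d → ℂ))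
    (X : Matrix (Fin d) (Fin d) ℂ) : Matrix (Fin d) (Fin d) ℂ :=
  ∑ i, rankOneProj v i * X * rankOneProj v i

/-- The dephasing superoperator of the rotated basis `B' = {U (v i)}`:
`D_{B'}(X) = ∑ i, (U P_i Uᴴ) X (U P_i Uᴴ)`. -/
noncomputable def dephaseRot {d : ℕ} (v : Fin d → (Fin d → ℂ))
    (U : Matrix (Fin d) (Fin d) ℂ) (X : Matrix (Fin d) (Fin d) ℂ) :
    Matrix (Fin d) (Fin d) ℂ :=
  ∑ i, (U * rankOneProj v i * Uᴴ) * X * (U * rankOneProj v i * Uᴴ)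

/-- The bistochastic matrix `(X_U)_{ij} = |⟨i|U|j⟩|²` of a unitary `U`, with respect to an
orthonormal basis `{v i}`. -/
noncomputable def xMat {d : ℕ} (v : Fin d → (Fin d → ℂ)) (U : Matrix (Fin d) (Fin d) ℂ) :
    Matrix (Fin d) (Fin d) ℝ :=
  Matrix.of fun i j => ‖star (v i) ⬝ᵥ (U *ᵥ v j)‖ ^ 2

/-- **2-norm CGP of a maximally dephasing channel.**
For an orthonormal basis `B = {v i}` of `ℂ^d` and a unitary `U` (rotated basis `B'`),
`∑ i (⟨D_{B'} P_i, D_{B'} P_i⟩ − ⟨D_B D_{B'} P_i, D_B D_{B'} P_i⟩)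
  = Tr[X_U X_Uᵀ (I − X_U X_Uᵀ)]`,
so that the 2-norm coherence generating power of `D_{B'}` with respect to `B` equals
`Tr[X_U X_Uᵀ (I − X_U X_Uᵀ)] / (d(d+1))`. -/
theorem cgp_maximal_dephasing {d : ℕ}
    (v : Fin d → (Fin d → ℂ))
    (hv : ∀ i j, star (v i) ⬝ᵥ v j = if i = j then 1 else 0)
    (U : Matrix (Fin d) (Fin d) ℂ) (hU : U ∈ Matrix.unitaryGroup (Fin d) ℂ) :
    ∑ i, (((dephaseRot v U (rankOneProj v i))ᴴ * dephaseRot v U (rankOneProj v i)).trace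
        - ((dephase v (dephaseRot v U (rankOneProj v i)))ᴴ *
            dephase v (dephaseRot v U (rankOneProj v i))).trace)
      = (((xMat v U * (xMat v U)ᵀ * (1 - xMat v U * (xMat v U)ᵀ)).trace : ℝ) : ℂ) := by
  set X := xMat v U with hXdef
  set w : Fin d → (Fin d → ℂ) := fun j => U *ᵥ v j with hwdef
  have hUU : Uᴴ * U = 1 := by
    have := hU.1
    rwa [Matrix.star_eq_conjTranspose] at this
  -- rotated basis is orthonormal
  have hw : ∀ i j, star (w i) ⬝ᵥ w j = if i = j then 1 else 0 := by
    intro i j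
    rw [hwdef]
    simp only
    rw [star_mulVec, dotProduct_mulVec, vecMul_vecMul, hUU, vecMul_one]
    exact hv i j
  -- |⟨v i, w j⟩|² as a complex scalar
  have hX : ∀ i j, (star (v i) ⬝ᵥ w j) * star (star (v i) ⬝ᵥ w j)
      = ((X i j : ℝ) : ℂ) := by
    intro i j
    rw [show (star (star (v i) ⬝ᵥ w j)) = (starRingEnd ℂ) (star (v i) ⬝ᵥ w j) from rfl,
      Complex.mul_conj]
    norm_cast
    simp [hXdef, xMat, hwdef, Complex.normSq_eq_norm_sq]
  -- rotated projectors
  have hQ : ∀ j, U * rankOneProj v j * Uᴴ = rankOneProj w j := by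
    intro j
    ext a b
    simp only [rankOneProj, Matrix.mul_apply, vecMulVec_apply, conjTranspose_apply,
      Pi.star_apply, hwdef, mulVec, dotProduct, star_sum, star_mul',
      Finset.sum_mul, Finset.mul_sum]
    refine Finset.sum_congr rfl fun c _ => Finset.sum_congr rfl fun e _ => by ring
  -- dephaseRot of P_i as a combination of rotated projectors
  have hA : ∀ i, dephaseRot v U (rankOneProj v i)
      = ∑ j, ((X i j : ℝ) : ℂ) • rankOneProj w j := by
    intro i
    rw [dephaseRot]
    refine Finset.sum_congr rfl fun j _ => ?_
    rw [hQ j]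
    show vecMulVec (w j) (star (w j)) * rankOneProj v i * vecMulVec (w j) (star (w j)) = _
    rw [sandwich]
    congr 1
    rw [rankOneProj, vmv_mulVec, dotProduct_smul, smul_eq_mul,
      star_dotProduct (v := w j) (w := v i)]
    exact hX i j
  -- quadratic form of dephaseRot in the original basis
  have hcoef : ∀ i k, star (v k) ⬝ᵥ (dephaseRot v U (rankOneProj v i) *ᵥ v k)
      = ((∑ j, X i j * X k j : ℝ) : ℂ) := by
    intro i k
    rw [hA i]
    rw [sum_mulVec', dotProduct_sum']
    push_cast
    refine Finset.sum_congr rfl fun j _ => ?_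
    rw [smul_mulVec, dotProduct_smul, rankOneProj, vmv_mulVec, dotProduct_smul,
      star_dotProduct (v := w j) (w := v k),
      smul_eq_mul, smul_eq_mul]
    rw [← hX k j]
    ring
  -- dephase of dephaseRot
  have hD : ∀ i, dephase v (dephaseRot v U (rankOneProj v i))
      = ∑ k, ((∑ j, X i j * X k j : ℝ) : ℂ) • rankOneProj v k := by
    intro i
    rw [dephase]
    refine Finset.sum_congr rfl fun k _ => ?_
    show vecMulVec (v k) (star (v k)) * _ * vecMulVec (v k) (star (v k)) = _
    rw [sandwich, hcoef i k]
    rfl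
  -- compute both terms via hnorm
  have hmain : ∀ i,
      ((dephaseRot v U (rankOneProj v i))ᴴ * dephaseRot v U (rankOneProj v i)).trace
        - ((dephase v (dephaseRot v U (rankOneProj v i)))ᴴ *
            dephase v (dephaseRot v U (rankOneProj v i))).trace
      = (((∑ j, X i j ^ 2) - ∑ k, (∑ j, X i j * X k j) ^ 2 : ℝ) : ℂ) := by
    intro i
    rw [hD i, hA i, hnorm w hw (fun j => X i j),
      hnorm v hv (fun k => ∑ j, X i j * X k j)]
    push_cast
    ring
  rw [Finset.sum_congr rfl fun i _ => hmain i]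
  rw [← Complex.ofReal_sum]
  congr 1
  -- the real identity
  rw [mul_sub, mul_one, Matrix.trace_sub, Finset.sum_sub_distrib]
  congr 1
  · simp [Matrix.trace, Matrix.diag, Matrix.mul_apply, Matrix.transpose_apply, sq]
  · simp only [Matrix.trace, Matrix.diag, Matrix.mul_apply, Matrix.transpose_apply]
    refine Finset.sum_congr rfl fun i _ => Finset.sum_congr rfl fun k _ => ?_
    rw [sq]
    congr 1
    exact Finset.sum_congr rfl fun j _ => mul_comm _ _
end

section
/- Let U be a d×d unitary matrix (d ≥ 1) and X_U the d×d real matrix with entries (X_U)_{ij} = |⟨i|U|j⟩|². Then 0 ≤ Tr[ X_U X_Uᵀ ( I − X_U X_Uᵀ ) ] ≤ (d−1)/4, and the lower bound 0 is attained if and only if the dephasing superoperators commute: D_B ∘ D_{B'} = D_{B'} ∘ D_B, where D_{B'}(X) = ∑_i (U P_i U†) X (U P_i U†). -/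
open Matrix BigOperators

section CGPaux
open Complex
variable {d : ℕ}


/-- trace of `Aᵀ B A` is nonnegative when `B` has nonneg quadratic form. -/
lemma trace_conj_nonneg (B A : Matrix (Fin d) (Fin d) ℝ)
    (hB : ∀ u : Fin d → ℝ, 0 ≤ u ⬝ᵥ B *ᵥ u) : 0 ≤ (Aᵀ * B * A).trace := by
  have key : ∀ j, (Aᵀ * B * A) j j = (fun i => A i j) ⬝ᵥ B *ᵥ (fun i => A i j) := by
    intro j
    simp only [Matrix.mul_apply, Matrix.transpose_apply, dotProduct, Matrix.mulVec,
      Finset.sum_mul, Finset.mul_sum]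
    rw [Finset.sum_comm]
    exact Finset.sum_congr rfl fun i _ => Finset.sum_congr rfl fun k _ => by ring
  rw [Matrix.trace]
  exact Finset.sum_nonneg fun j _ => by rw [Matrix.diag_apply, key j]; exact hB _

lemma eq_zero_of_trace_transpose_mul_self (M : Matrix (Fin d) (Fin d) ℝ)
    (h : (Mᵀ * M).trace = 0) : M = 0 := by
  have ht : (Mᵀ * M).trace = ∑ j, ∑ i, (M i j)^2 := by
    simp [Matrix.trace, Matrix.mul_apply, sq]
  rw [ht] at h
  ext i j
  have h1 : ∀ j ∈ Finset.univ, (0:ℝ) ≤ ∑ i, (M i j)^2 :=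
    fun j _ => Finset.sum_nonneg fun i _ => sq_nonneg _
  have h2 := (Finset.sum_eq_zero_iff_of_nonneg h1).mp h j (Finset.mem_univ j)
  have h3 := (Finset.sum_eq_zero_iff_of_nonneg (fun i _ => sq_nonneg (M i j))).mp h2 i
    (Finset.mem_univ i)
  simpa [pow_eq_zero_iff] using h3

lemma eq_zero_of_trace_mul_conjTranspose (G : Matrix (Fin d) (Fin d) ℂ)
    (h : (G * Gᴴ).trace = 0) : G = 0 := by
  have ht : (G * Gᴴ).trace = ((∑ i, ∑ j, Complex.normSq (G i j) : ℝ) : ℂ) := by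
    push_cast
    simp only [Matrix.trace, Matrix.mul_apply, Matrix.diag_apply, Matrix.conjTranspose_apply]
    exact Finset.sum_congr rfl fun i _ => Finset.sum_congr rfl fun j _ => by
      simpa using Complex.mul_conj (G i j)
  rw [ht] at h
  have h0 : (∑ i, ∑ j, Complex.normSq (G i j) : ℝ) = 0 := by exact_mod_cast h
  ext i j
  have h1 : ∀ i ∈ Finset.univ, (0:ℝ) ≤ ∑ j, Complex.normSq (G i j) :=
    fun i _ => Finset.sum_nonneg fun j _ => Complex.normSq_nonneg _
  have h2 := (Finset.sum_eq_zero_iff_of_nonneg h1).mp h0 i (Finset.mem_univ i)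
  have h3 := (Finset.sum_eq_zero_iff_of_nonneg
    (fun j _ => Complex.normSq_nonneg (G i j))).mp h2 j (Finset.mem_univ j)
  simpa using (Complex.normSq_eq_zero.mp h3)



lemma cgpDiagSandwich (N : Matrix (Fin d) (Fin d) ℂ) :
    ∑ i, diagonal (Pi.single i (1:ℂ)) * N * diagonal (Pi.single i 1)
      = diagonal (fun i => N i i) := by
  ext a b
  simp only [Matrix.sum_apply, Matrix.mul_diagonal, Matrix.diagonal_mul, Pi.single_apply]
  by_cases h : a = b
  · subst h; simp
  · rw [diagonal_apply_ne _ h]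
    refine Finset.sum_eq_zero fun i _ => ?_
    by_cases hai : a = i
    · subst hai
      rw [if_neg (fun hba : b = a => h hba.symm)]
      ring
    · rw [if_neg hai]; ring

lemma cgpDiagOfSum (p : Fin d → ℂ) (g : Fin d → Fin d → ℂ) :
    diagonal (fun j => ∑ k, p k * g k j) = ∑ k, p k • diagonal (g k) := by
  ext a b
  by_cases h : a = b
  · subst h; simp [Matrix.sum_apply]
  · simp [Matrix.sum_apply, diagonal_apply_ne _ h]

lemma cgpCDCh (C : Matrix (Fin d) (Fin d) ℂ) (f : Fin d → ℂ) (a b : Fin d) :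
    (C * diagonal f * Cᴴ) a b = ∑ j, f j * (C a j * (starRingEnd ℂ) (C b j)) := by
  rw [Matrix.mul_apply]
  refine Finset.sum_congr rfl fun j _ => ?_
  rw [Matrix.mul_diagonal, Matrix.conjTranspose_apply, RCLike.star_def]
  ring

lemma cgpChDC (C : Matrix (Fin d) (Fin d) ℂ) (f : Fin d → ℂ) (a b : Fin d) :
    (Cᴴ * diagonal f * C) a b = ∑ i, f i * ((starRingEnd ℂ) (C i a) * C i b) := by
  rw [Matrix.mul_apply]
  refine Finset.sum_congr rfl fun i _ => ?_
  rw [Matrix.mul_diagonal, Matrix.conjTranspose_apply, RCLike.star_def]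
  ring

lemma cgpTraceDiagMul (f : Fin d → ℂ) (A : Matrix (Fin d) (Fin d) ℂ) :
    (diagonal f * A).trace = ∑ j, f j * A j j := by
  simp [Matrix.trace, Matrix.diagonal_mul]

lemma cgpConjMul (V : Matrix (Fin d) (Fin d) ℂ) (hVV' : V * Vᴴ = 1)
    (A B : Matrix (Fin d) (Fin d) ℂ) :
    Vᴴ * (A * B) * V = (Vᴴ * A * V) * (Vᴴ * B * V) := by
  have h : (Vᴴ * A * V) * (Vᴴ * B * V) = Vᴴ * A * (V * Vᴴ) * (B * V) := by
    noncomm_ring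
  rw [h, hVV']
  noncomm_ring

lemma cgpConjCancel (V : Matrix (Fin d) (Fin d) ℂ) (hVV' : V * Vᴴ = 1)
    {M N : Matrix (Fin d) (Fin d) ℂ}
    (h : Vᴴ * M * V = Vᴴ * N * V) : M = N := by
  have e : ∀ P : Matrix (Fin d) (Fin d) ℂ, V * (Vᴴ * P * V) * Vᴴ = P := by
    intro P
    have h2 : V * (Vᴴ * P * V) * Vᴴ = (V * Vᴴ) * P * (V * Vᴴ) := by noncomm_ring
    rw [h2, hVV']; noncomm_ring
  calc M = V * (Vᴴ * M * V) * Vᴴ := (e M).symm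
    _ = V * (Vᴴ * N * V) * Vᴴ := by rw [h]
    _ = N := e N



lemma cgpUpperBound (hd : 1 ≤ d) (Y : Matrix (Fin d) (Fin d) ℝ) (hY : Y.IsHermitian)
    (h0 : ∀ u : Fin d → ℝ, 0 ≤ u ⬝ᵥ Y *ᵥ u)
    (h1 : ∀ u : Fin d → ℝ, 0 ≤ u ⬝ᵥ ((1 - Y) *ᵥ u))
    (hone : Y *ᵥ (fun _ => 1) = (fun _ => 1)) :
    Y.trace - (Y * Y).trace ≤ ((d : ℝ) - 1) / 4 := by
  classical
  set S : Matrix (Fin d) (Fin d) ℝ := (hY.eigenvectorUnitary : Matrix (Fin d) (Fin d) ℝ) with hS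
  set lam := hY.eigenvalues with hlam
  set D : Matrix (Fin d) (Fin d) ℝ := diagonal (RCLike.ofReal ∘ lam) with hD
  have hSS : star S * S = 1 := Matrix.mem_unitaryGroup_iff'.mp (hY.eigenvectorUnitary).2
  have hSS' : S * star S = 1 := Matrix.mem_unitaryGroup_iff.mp (hY.eigenvectorUnitary).2
  have hspec : Y = S * D * star S := hY.spectral_theorem
  -- traces
  have htr : Y.trace = ∑ i, lam i := by
    conv_lhs => rw [hspec]
    rw [Matrix.trace_mul_cycle, hSS, one_mul, trace_diagonal]
    simp
  have htr2 : (Y * Y).trace = ∑ i, (lam i) ^ 2 := by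
    conv_lhs => rw [hspec]
    have h2 : (S * D * star S) * (S * D * star S) = S * (D * D) * star S := by
      rw [show (S * D * star S) * (S * D * star S)
          = S * D * (star S * S) * (D * star S) from by noncomm_ring, hSS]
      noncomm_ring
    rw [h2, Matrix.trace_mul_cycle, hSS, one_mul, hD, diagonal_mul_diagonal, trace_diagonal]
    simp [sq]
  -- eigenvalue bounds
  have hvnorm : ∀ i, (⇑(hY.eigenvectorBasis i) : Fin d → ℝ) ⬝ᵥ ⇑(hY.eigenvectorBasis i) = 1 := by
    intro i
    have hn : ‖hY.eigenvectorBasis i‖ = 1 := hY.eigenvectorBasis.orthonormal.1 i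
    have : (inner ℝ (hY.eigenvectorBasis i) (hY.eigenvectorBasis i) : ℝ)
        = ‖hY.eigenvectorBasis i‖ ^ 2 := real_inner_self_eq_norm_sq _
    rw [hn] at this
    simp only [PiLp.inner_apply, RCLike.inner_apply, conj_trivial, one_pow] at this
    simpa [dotProduct, mul_comm] using this
  have hlam_eq : ∀ i, lam i
      = (⇑(hY.eigenvectorBasis i) : Fin d → ℝ) ⬝ᵥ (Y *ᵥ ⇑(hY.eigenvectorBasis i)) := by
    intro i
    have := hY.eigenvalues_eq i
    simpa using this
  have hlam0 : ∀ i, 0 ≤ lam i := fun i => (hlam_eq i) ▸ h0 _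
  have hlam1 : ∀ i, lam i ≤ 1 := by
    intro i
    have := h1 (⇑(hY.eigenvectorBasis i))
    rw [sub_mulVec, one_mulVec, dotProduct_sub, hvnorm i, ← hlam_eq i] at this
    linarith
  -- eigenvalue 1 exists
  have hne : (fun _ : Fin d => (1 : ℝ)) ≠ 0 := by
    intro h
    have := congrFun h ⟨0, hd⟩
    simp at this
  have hmv : (Y - 1) *ᵥ (fun _ => 1) = 0 := by
    rw [sub_mulVec, hone, one_mulVec, sub_self]
  have hdet : (Y - 1).det = 0 :=
    (Matrix.exists_mulVec_eq_zero_iff).mp ⟨_, hne, hmv⟩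
  have hfact : Y - 1 = S * (D - 1) * star S := by
    have h3 : S * (D - 1) * star S = S * D * star S - S * star S := by noncomm_ring
    rw [h3, hSS', ← hspec]
  have hdetD : (D - 1).det = 0 := by
    have h4 : (Y - 1).det = S.det * ((D - 1).det * (star S).det) := by
      rw [hfact, Matrix.det_mul, Matrix.det_mul]; ring
    have h5 : S.det * (star S).det = 1 := by
      rw [← Matrix.det_mul, hSS', Matrix.det_one]
    nlinarith [h4, h5, hdet]
  have hprod : ∏ i, (lam i - 1) = 0 := by
    have : D - 1 = diagonal (fun i => lam i - 1) := by
      rw [hD, ← Matrix.diagonal_one, Matrix.diagonal_sub]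
      rfl
    rw [this, Matrix.det_diagonal] at hdetD
    exact hdetD
  obtain ⟨i0, _, hi0⟩ := Finset.prod_eq_zero_iff.mp hprod
  have hi0' : lam i0 = 1 := by linarith [sub_eq_zero.mp hi0]
  -- final bound
  rw [htr, htr2, ← Finset.sum_sub_distrib]
  rw [← Finset.sum_erase_add Finset.univ _ (Finset.mem_univ i0)]
  have hzero : lam i0 - lam i0 ^ 2 = 0 := by rw [hi0']; ring
  rw [hzero, add_zero]
  have hbound : ∀ i ∈ Finset.univ.erase i0, lam i - lam i ^ 2 ≤ 1 / 4 := by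
    intro i _
    nlinarith [sq_nonneg (lam i - 1 / 2)]
  calc ∑ i ∈ Finset.univ.erase i0, (lam i - lam i ^ 2)
      ≤ (Finset.univ.erase i0).card • (1 / 4 : ℝ) := Finset.sum_le_card_nsmul _ _ _ hbound
    _ = ((d - 1 : ℕ) : ℝ) * (1 / 4) := by
        rw [Finset.card_erase_of_mem (Finset.mem_univ i0), Finset.card_univ, Fintype.card_fin,
          nsmul_eq_mul]
    _ ≤ ((d : ℝ) - 1) / 4 := by
        rw [Nat.cast_sub hd]
        push_cast
        ring_nf
        exact le_refl _



lemma cgpQuadY (X : Matrix (Fin d) (Fin d) ℝ) (u : Fin d → ℝ) :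
    u ⬝ᵥ ((X * Xᵀ) *ᵥ u) = (Xᵀ *ᵥ u) ⬝ᵥ (Xᵀ *ᵥ u) := by
  rw [← Matrix.mulVec_mulVec, Matrix.dotProduct_mulVec, ← Matrix.mulVec_transpose]

lemma cgpFormY (X : Matrix (Fin d) (Fin d) ℝ) (u : Fin d → ℝ) :
    0 ≤ u ⬝ᵥ ((X * Xᵀ) *ᵥ u) := by
  rw [cgpQuadY]
  exact Finset.sum_nonneg fun j _ => mul_self_nonneg _

lemma cgpFormOneSubY (X : Matrix (Fin d) (Fin d) ℝ)
    (hXnn : ∀ i j, 0 ≤ X i j) (hrow : ∀ i, ∑ j, X i j = 1) (hcol : ∀ j, ∑ i, X i j = 1)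
    (u : Fin d → ℝ) :
    0 ≤ u ⬝ᵥ ((1 - X * Xᵀ) *ᵥ u) := by
  rw [sub_mulVec, one_mulVec, dotProduct_sub, cgpQuadY]
  have key : ∀ j, ((Xᵀ *ᵥ u) j) * ((Xᵀ *ᵥ u) j) ≤ ∑ i, X i j * (u i)^2 := by
    intro j
    have cs := Finset.sum_sq_le_sum_mul_sum_of_sq_eq_mul Finset.univ
      (r := fun i => X i j * u i) (f := fun i => X i j) (g := fun i => X i j * (u i)^2)
      (fun i _ => hXnn i j) (fun i _ => mul_nonneg (hXnn i j) (sq_nonneg _))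
      (fun i _ => by ring)
    rw [hcol j, one_mul] at cs
    have he : (Xᵀ *ᵥ u) j = ∑ i, X i j * u i := by
      simp [Matrix.mulVec, dotProduct, Matrix.transpose_apply, mul_comm]
    rw [he, ← sq]
    exact cs
  have hsum : ∑ j, ((Xᵀ *ᵥ u) j) * ((Xᵀ *ᵥ u) j) ≤ ∑ i, u i * u i := by
    calc ∑ j, ((Xᵀ *ᵥ u) j) * ((Xᵀ *ᵥ u) j) ≤ ∑ j, ∑ i, X i j * (u i)^2 :=
          Finset.sum_le_sum fun j _ => key j
      _ = ∑ i, u i * u i := by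
          rw [Finset.sum_comm]
          refine Finset.sum_congr rfl fun i _ => ?_
          rw [← Finset.sum_mul, hrow i, one_mul, sq]
  have hd1 : (Xᵀ *ᵥ u) ⬝ᵥ (Xᵀ *ᵥ u) = ∑ j, ((Xᵀ *ᵥ u) j) * ((Xᵀ *ᵥ u) j) := rfl
  have hd2 : u ⬝ᵥ u = ∑ i, u i * u i := rfl
  rw [hd1]
  linarith [hsum, hd2 ▸ le_refl (u ⬝ᵥ u)]

lemma cgpYYeq_of_trace_zero (X : Matrix (Fin d) (Fin d) ℝ)
    (hXnn : ∀ i j, 0 ≤ X i j) (hrow : ∀ i, ∑ j, X i j = 1) (hcol : ∀ j, ∑ i, X i j = 1)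
    (trace_conj_nonneg : ∀ B A : Matrix (Fin d) (Fin d) ℝ,
      (∀ u : Fin d → ℝ, 0 ≤ u ⬝ᵥ B *ᵥ u) → 0 ≤ (Aᵀ * B * A).trace)
    (eq_zero_of_trace : ∀ M : Matrix (Fin d) (Fin d) ℝ, (Mᵀ * M).trace = 0 → M = 0)
    (h : ((X * Xᵀ) * (1 - X * Xᵀ)).trace = 0) :
    (X * Xᵀ) * (X * Xᵀ) = X * Xᵀ := by
  set Y := X * Xᵀ with hY
  have hYsymm : Yᵀ = Y := by rw [hY, Matrix.transpose_mul, Matrix.transpose_transpose]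
  have hAsymm : (1 - Y)ᵀ = 1 - Y := by rw [Matrix.transpose_sub, Matrix.transpose_one, hYsymm]
  have h1 : 0 ≤ ((1 - Y)ᵀ * Y * (1 - Y)).trace :=
    trace_conj_nonneg Y (1 - Y) (fun u => cgpFormY X u)
  have h2 : 0 ≤ (Yᵀ * (1 - Y) * Y).trace :=
    trace_conj_nonneg (1 - Y) Y (fun u => cgpFormOneSubY X hXnn hrow hcol u)
  have hsplit : ((1 - Y)ᵀ * Y * (1 - Y)).trace + (Yᵀ * (1 - Y) * Y).trace
      = (Y * (1 - Y)).trace := by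
    rw [hAsymm, hYsymm]
    rw [show (Y * (1 - Y) * Y).trace = (Y * Y * (1 - Y)).trace from
      (Matrix.trace_mul_cycle Y (1 - Y) Y).trans (by rw [Matrix.mul_assoc, ← Matrix.mul_assoc])]
    rw [← Matrix.trace_add]
    congr 1
    noncomm_ring
  have ht1 : ((1 - Y)ᵀ * Y * (1 - Y)).trace = 0 := by
    rw [h] at hsplit; linarith
  have hM : Xᵀ * (1 - Y) = 0 := by
    apply eq_zero_of_trace
    have : (Xᵀ * (1 - Y))ᵀ * (Xᵀ * (1 - Y)) = (1 - Y)ᵀ * (X * Xᵀ) * (1 - Y) := by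
      rw [Matrix.transpose_mul, Matrix.transpose_transpose]
      noncomm_ring
    rw [this, ← hY, ht1]
  have hXY : Xᵀ * Y = Xᵀ := by
    have := sub_eq_zero.mpr (rfl : Xᵀ * (1:Matrix (Fin d) (Fin d) ℝ) = Xᵀ * 1)
    have hexp : Xᵀ * 1 - Xᵀ * Y = 0 := by rw [← Matrix.mul_sub]; exact hM
    rw [Matrix.mul_one] at hexp
    linear_combination (norm := noncomm_ring) -hexp
  have hYX : Y * X = X := by
    have := congrArg Matrix.transpose hXY
    rw [Matrix.transpose_mul, Matrix.transpose_transpose, hYsymm] at this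
    exact this
  calc Y * Y = Y * (X * Xᵀ) := by rw [hY]
    _ = (Y * X) * Xᵀ := by noncomm_ring
    _ = X * Xᵀ := by rw [hYX]
    _ = Y := hY.symm

noncomputable def cgpV {d : ℕ} (v : Fin d → (Fin d → ℂ)) : Matrix (Fin d) (Fin d) ℂ :=
  Matrix.of fun a b => v b a

noncomputable def cgpC {d : ℕ} (v : Fin d → (Fin d → ℂ)) (U : Matrix (Fin d) (Fin d) ℂ) :
    Matrix (Fin d) (Fin d) ℂ := (cgpV v)ᴴ * U * cgpV v

section setup
variable {d : ℕ} {v : Fin d → (Fin d → ℂ)} {U : Matrix (Fin d) (Fin d) ℂ}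

lemma cgpVhV (hv : ∀ i j, star (v i) ⬝ᵥ v j = if i = j then (1:ℂ) else 0) :
    (cgpV v)ᴴ * cgpV v = 1 := by
  ext i j
  have h := hv i j
  simp only [dotProduct, Pi.star_apply, RCLike.star_def] at h
  simp only [Matrix.mul_apply, Matrix.conjTranspose_apply, cgpV, Matrix.of_apply,
    Matrix.one_apply, RCLike.star_def]
  exact h

lemma cgpVmem (hv : ∀ i j, star (v i) ⬝ᵥ v j = if i = j then (1:ℂ) else 0) :
    cgpV v ∈ Matrix.unitaryGroup (Fin d) ℂ :=
  Matrix.mem_unitaryGroup_iff'.mpr (by rw [Matrix.star_eq_conjTranspose]; exact cgpVhV hv)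

lemma cgpVVh (hv : ∀ i j, star (v i) ⬝ᵥ v j = if i = j then (1:ℂ) else 0) :
    cgpV v * (cgpV v)ᴴ = 1 := by
  have h := Matrix.mem_unitaryGroup_iff.mp (cgpVmem hv)
  rwa [Matrix.star_eq_conjTranspose] at h

lemma cgpCmem (hv : ∀ i j, star (v i) ⬝ᵥ v j = if i = j then (1:ℂ) else 0)
    (hU : U ∈ Matrix.unitaryGroup (Fin d) ℂ) :
    cgpC v U ∈ Matrix.unitaryGroup (Fin d) ℂ := by
  have h1 : (cgpV v)ᴴ ∈ Matrix.unitaryGroup (Fin d) ℂ := by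
    rw [← Matrix.star_eq_conjTranspose]
    exact Unitary.star_mem (cgpVmem hv)
  exact mul_mem (mul_mem h1 hU) (cgpVmem hv)

lemma cgpChC (hv : ∀ i j, star (v i) ⬝ᵥ v j = if i = j then (1:ℂ) else 0)
    (hU : U ∈ Matrix.unitaryGroup (Fin d) ℂ) : (cgpC v U)ᴴ * cgpC v U = 1 := by
  have h := Matrix.mem_unitaryGroup_iff'.mp (cgpCmem hv hU)
  rwa [Matrix.star_eq_conjTranspose] at h

lemma cgpCCh (hv : ∀ i j, star (v i) ⬝ᵥ v j = if i = j then (1:ℂ) else 0)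
    (hU : U ∈ Matrix.unitaryGroup (Fin d) ℂ) : cgpC v U * (cgpC v U)ᴴ = 1 := by
  have h := Matrix.mem_unitaryGroup_iff.mp (cgpCmem hv hU)
  rwa [Matrix.star_eq_conjTranspose] at h

lemma cgpCapp (i j : Fin d) : cgpC v U i j = star (v i) ⬝ᵥ (U *ᵥ v j) := by
  simp only [cgpC, Matrix.mul_apply, Matrix.conjTranspose_apply, cgpV, Matrix.of_apply,
    Matrix.mulVec, dotProduct, Pi.star_apply, RCLike.star_def, Finset.mul_sum, Finset.sum_mul]
  rw [Finset.sum_comm]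
  exact Finset.sum_congr rfl fun a _ => Finset.sum_congr rfl fun b _ => by ring

lemma cgpXcC (i j : Fin d) :
    ((xMat v U i j : ℝ) : ℂ) = cgpC v U i j * (starRingEnd ℂ) (cgpC v U i j) := by
  rw [cgpCapp]
  have h1 : xMat v U i j = Complex.normSq (star (v i) ⬝ᵥ (U *ᵥ v j)) := by
    simp [xMat, Complex.normSq_eq_norm_sq]
  rw [h1, Complex.mul_conj]

lemma cgpChapp : (cgpC v U)ᴴ = (cgpV v)ᴴ * Uᴴ * cgpV v := by
  simp only [cgpC, Matrix.conjTranspose_mul, Matrix.conjTranspose_conjTranspose]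
  noncomm_ring

lemma cgpPV (hv : ∀ i j, star (v i) ⬝ᵥ v j = if i = j then (1:ℂ) else 0) (k : Fin d) :
    (cgpV v)ᴴ * rankOneProj v k * cgpV v = Matrix.diagonal (Pi.single k (1 : ℂ)) := by
  ext a b
  have expand : ((cgpV v)ᴴ * rankOneProj v k * cgpV v) a b
      = (star (v a) ⬝ᵥ v k) * (star (v k) ⬝ᵥ v b) := by
    simp only [Matrix.mul_apply, Matrix.conjTranspose_apply, cgpV, Matrix.of_apply,
      rankOneProj, Matrix.vecMulVec_apply, Pi.star_apply, RCLike.star_def, dotProduct,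
      Finset.mul_sum, Finset.sum_mul]
    exact Finset.sum_congr rfl fun c _ => Finset.sum_congr rfl fun e _ => by ring
  rw [expand, hv, hv]
  by_cases hab : a = b
  · subst hab
    by_cases hak : a = k
    · subst hak; simp
    · simp [hak, fun h : k = a => hak h.symm]
  · rw [Matrix.diagonal_apply_ne _ hab]
    by_cases hak : a = k
    · subst hak
      rw [if_neg (fun h : a = b => hab h)]
      simp
    · simp [hak]

lemma cgpQV (hv : ∀ i j, star (v i) ⬝ᵥ v j = if i = j then (1:ℂ) else 0) (k : Fin d) :
    (cgpV v)ᴴ * (U * rankOneProj v k * Uᴴ) * cgpV v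
      = cgpC v U * Matrix.diagonal (Pi.single k (1 : ℂ)) * (cgpC v U)ᴴ := by
  have e1 : (cgpV v)ᴴ * (U * rankOneProj v k * Uᴴ) * cgpV v
      = ((cgpV v)ᴴ * (U * rankOneProj v k) * cgpV v) * ((cgpV v)ᴴ * Uᴴ * cgpV v) :=
    cgpConjMul (cgpV v) (cgpVVh hv) _ _
  have e2 : (cgpV v)ᴴ * (U * rankOneProj v k) * cgpV v
      = ((cgpV v)ᴴ * U * cgpV v) * ((cgpV v)ᴴ * rankOneProj v k * cgpV v) :=
    cgpConjMul (cgpV v) (cgpVVh hv) _ _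
  rw [e1, e2, cgpPV hv, ← cgpC, ← cgpChapp]

lemma cgpTildeDephase (hv : ∀ i j, star (v i) ⬝ᵥ v j = if i = j then (1:ℂ) else 0)
    (M : Matrix (Fin d) (Fin d) ℂ) :
    (cgpV v)ᴴ * dephase v M * cgpV v
      = Matrix.diagonal (fun i => ((cgpV v)ᴴ * M * cgpV v) i i) := by
  have e0 : (cgpV v)ᴴ * dephase v M * cgpV v
      = ∑ i, (cgpV v)ᴴ * (rankOneProj v i * M * rankOneProj v i) * cgpV v := by
    rw [dephase, Matrix.mul_sum, Matrix.sum_mul]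
  rw [e0]
  have e1 : ∀ i, (cgpV v)ᴴ * (rankOneProj v i * M * rankOneProj v i) * cgpV v
      = Matrix.diagonal (Pi.single i (1:ℂ)) * ((cgpV v)ᴴ * M * cgpV v)
        * Matrix.diagonal (Pi.single i 1) := by
    intro i
    have h1 : (cgpV v)ᴴ * (rankOneProj v i * M * rankOneProj v i) * cgpV v
        = ((cgpV v)ᴴ * (rankOneProj v i * M) * cgpV v)
          * ((cgpV v)ᴴ * rankOneProj v i * cgpV v) :=
      cgpConjMul (cgpV v) (cgpVVh hv) _ _
    have h2 : (cgpV v)ᴴ * (rankOneProj v i * M) * cgpV v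
        = ((cgpV v)ᴴ * rankOneProj v i * cgpV v) * ((cgpV v)ᴴ * M * cgpV v) :=
      cgpConjMul (cgpV v) (cgpVVh hv) _ _
    rw [h1, h2, cgpPV hv]
  simp only [e1]
  exact cgpDiagSandwich _

lemma cgpTildeDephaseRot (hv : ∀ i j, star (v i) ⬝ᵥ v j = if i = j then (1:ℂ) else 0)
    (hU : U ∈ Matrix.unitaryGroup (Fin d) ℂ) (M : Matrix (Fin d) (Fin d) ℂ) :
    (cgpV v)ᴴ * dephaseRot v U M * cgpV v
      = cgpC v U * Matrix.diagonal
          (fun j => ((cgpC v U)ᴴ * ((cgpV v)ᴴ * M * cgpV v) * cgpC v U) j j)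
        * (cgpC v U)ᴴ := by
  have e0 : (cgpV v)ᴴ * dephaseRot v U M * cgpV v
      = ∑ j, (cgpV v)ᴴ * ((U * rankOneProj v j * Uᴴ) * M * (U * rankOneProj v j * Uᴴ))
          * cgpV v := by
    rw [dephaseRot, Matrix.mul_sum, Matrix.sum_mul]
  rw [e0]
  set C := cgpC v U with hC
  set Mt := (cgpV v)ᴴ * M * cgpV v with hMt
  have e1 : ∀ j, (cgpV v)ᴴ * ((U * rankOneProj v j * Uᴴ) * M * (U * rankOneProj v j * Uᴴ))
        * cgpV v
      = C * (Matrix.diagonal (Pi.single j (1:ℂ)) * (Cᴴ * Mt * C)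
          * Matrix.diagonal (Pi.single j 1)) * Cᴴ := by
    intro j
    have h1 : (cgpV v)ᴴ * ((U * rankOneProj v j * Uᴴ) * M * (U * rankOneProj v j * Uᴴ))
          * cgpV v
        = ((cgpV v)ᴴ * ((U * rankOneProj v j * Uᴴ) * M) * cgpV v)
          * ((cgpV v)ᴴ * (U * rankOneProj v j * Uᴴ) * cgpV v) :=
      cgpConjMul (cgpV v) (cgpVVh hv) _ _
    have h2 : (cgpV v)ᴴ * ((U * rankOneProj v j * Uᴴ) * M) * cgpV v
        = ((cgpV v)ᴴ * (U * rankOneProj v j * Uᴴ) * cgpV v) * Mt :=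
      cgpConjMul (cgpV v) (cgpVVh hv) _ _
    rw [h1, h2, cgpQV hv]
    have expand : (C * Matrix.diagonal (Pi.single j (1:ℂ)) * Cᴴ) * Mt
          * (C * Matrix.diagonal (Pi.single j 1) * Cᴴ)
        = C * (Matrix.diagonal (Pi.single j (1:ℂ)) * (Cᴴ * Mt * C)
            * Matrix.diagonal (Pi.single j 1)) * Cᴴ := by
      noncomm_ring
    rw [expand]
  simp only [e1]
  rw [← Matrix.sum_mul, ← Matrix.mul_sum, cgpDiagSandwich]

end setup

end CGPaux

set_option maxHeartbeats 1600000 in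
/-- **Bounds on the 2-norm CGP of maximally dephasing channels.**
For a unitary `U` (with `(X_U)_{ij} = |⟨i|U|j⟩|²`),
`0 ≤ Tr[X_U X_Uᵀ (I − X_U X_Uᵀ)] ≤ (d−1)/4`, and the lower bound `0` is attained
if and only if the dephasing superoperators `D_B` and `D_{B'}` commute. -/
theorem cgp_maximal_dephasing_bounds {d : ℕ} (hd : 1 ≤ d)
    (v : Fin d → (Fin d → ℂ))
    (hv : ∀ i j, star (v i) ⬝ᵥ v j = if i = j then 1 else 0)
    (U : Matrix (Fin d) (Fin d) ℂ) (hU : U ∈ Matrix.unitaryGroup (Fin d) ℂ) :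
    (0 ≤ (xMat v U * (xMat v U)ᵀ * (1 - xMat v U * (xMat v U)ᵀ)).trace
      ∧ (xMat v U * (xMat v U)ᵀ * (1 - xMat v U * (xMat v U)ᵀ)).trace ≤ ((d : ℝ) - 1) / 4)
    ∧ ((xMat v U * (xMat v U)ᵀ * (1 - xMat v U * (xMat v U)ᵀ)).trace = 0
        ↔ ∀ X : Matrix (Fin d) (Fin d) ℂ,
            dephase v (dephaseRot v U X) = dephaseRot v U (dephase v X)) := by
  classical
  set X : Matrix (Fin d) (Fin d) ℝ := xMat v U with hX
  set Y : Matrix (Fin d) (Fin d) ℝ := X * Xᵀ with hYdef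
  set C : Matrix (Fin d) (Fin d) ℂ := cgpC v U with hC
  have hCC : Cᴴ * C = 1 := cgpChC hv hU
  have hCC' : C * Cᴴ = 1 := cgpCCh hv hU
  set Xc : Matrix (Fin d) (Fin d) ℂ := Matrix.of (fun i j => ((X i j : ℝ) : ℂ)) with hXcdef
  have hXcC : ∀ i j, Xc i j = C i j * (starRingEnd ℂ) (C i j) := fun i j => cgpXcC i j
  -- nonnegativity of entries
  have hXnn : ∀ i j, 0 ≤ X i j := by
    intro i j
    rw [hX]
    exact sq_nonneg _
  -- row sums
  have hrow : ∀ i, ∑ j, X i j = 1 := by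
    intro i
    have h1 : ∑ j, ((X i j : ℝ) : ℂ) = 1 := by
      have e1 : ∑ j, ((X i j : ℝ) : ℂ) = ∑ j, C i j * (starRingEnd ℂ) (C i j) :=
        Finset.sum_congr rfl fun j _ => hXcC i j
      have e2 : (C * Cᴴ) i i = ∑ j, C i j * (starRingEnd ℂ) (C i j) := by
        simp [Matrix.mul_apply, Matrix.conjTranspose_apply, RCLike.star_def]
      rw [e1, ← e2, hCC']
      simp [Matrix.one_apply]
    exact_mod_cast h1
  -- column sums
  have hcol : ∀ j, ∑ i, X i j = 1 := by
    intro j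
    have h1 : ∑ i, ((X i j : ℝ) : ℂ) = 1 := by
      have e1 : ∑ i, ((X i j : ℝ) : ℂ) = ∑ i, (starRingEnd ℂ) (C i j) * C i j :=
        Finset.sum_congr rfl fun i _ => (hXcC i j).trans (mul_comm _ _)
      have e2 : (Cᴴ * C) j j = ∑ i, (starRingEnd ℂ) (C i j) * C i j := by
        simp [Matrix.mul_apply, Matrix.conjTranspose_apply, RCLike.star_def]
      rw [e1, ← e2, hCC]
      simp [Matrix.one_apply]
    exact_mod_cast h1
  -- hermitian
  have hherm : Y.IsHermitian := by
    rw [hYdef, ← Matrix.conjTranspose_eq_transpose_of_trivial]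
    exact Matrix.isHermitian_mul_conjTranspose_self X
  have hYsym : ∀ i k, Y i k = Y k i := by
    intro i k
    rw [hYdef]
    simp only [Matrix.mul_apply, Matrix.transpose_apply]
    exact Finset.sum_congr rfl fun j _ => by ring
  -- lower bound
  have hlower : 0 ≤ (Y * (1 - Y)).trace := by
    have e1 : Y * (1 - Y) = X * Xᵀ * (1 - Y) := by rw [hYdef]
    have hcycle : (Xᵀ * (1 - Y) * X).trace = (X * Xᵀ * (1 - Y)).trace := by
      rw [Matrix.trace_mul_cycle]
    rw [e1, ← hcycle]
    exact trace_conj_nonneg (1 - Y) X (fun u => by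
      rw [hYdef]; exact cgpFormOneSubY X hXnn hrow hcol u)
  -- upper bound
  have hone : Y *ᵥ (fun _ => (1:ℝ)) = fun _ => 1 := by
    have hXone : X *ᵥ (fun _ => (1:ℝ)) = fun _ => 1 := by
      funext i
      simp only [Matrix.mulVec, dotProduct, mul_one]
      exact hrow i
    have hXtone : Xᵀ *ᵥ (fun _ => (1:ℝ)) = fun _ => 1 := by
      funext j
      simp only [Matrix.mulVec, dotProduct, Matrix.transpose_apply, mul_one]
      exact hcol j
    rw [hYdef, ← Matrix.mulVec_mulVec, hXtone, hXone]
  have hupper : (Y * (1 - Y)).trace ≤ ((d:ℝ) - 1) / 4 := by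
    have htr : (Y * (1 - Y)).trace = Y.trace - (Y * Y).trace := by
      rw [Matrix.mul_sub, Matrix.mul_one, Matrix.trace_sub]
    rw [htr]
    exact cgpUpperBound hd Y hherm
      (fun u => by rw [hYdef]; exact cgpFormY X u)
      (fun u => by rw [hYdef]; exact cgpFormOneSubY X hXnn hrow hcol u)
      hone
  -- complex matrices
  set Yc : Matrix (Fin d) (Fin d) ℂ := Xc * Xcᵀ with hYcdef
  have hYcY : ∀ i k, Yc i k = ((Y i k : ℝ) : ℂ) := by
    intro i k
    rw [hYcdef, hYdef]
    simp only [Matrix.mul_apply, Matrix.transpose_apply, hXcdef, Matrix.of_apply]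
    push_cast
    try rfl
    try push_cast
  have hYcmul : ∀ i k, Yc i k = ∑ j, Xc i j * Xc k j := by
    intro i k
    rw [hYcdef]
    simp only [Matrix.mul_apply, Matrix.transpose_apply]
  set Rm : Fin d → Matrix (Fin d) (Fin d) ℂ :=
    fun i => C * Matrix.diagonal (fun j => Xc i j) * Cᴴ with hRm
  have hRdiag : ∀ i k, Rm i k k = Yc i k := by
    intro i k
    rw [hRm]
    simp only
    rw [cgpCDCh, hYcmul]
    exact Finset.sum_congr rfl fun j _ => by rw [← hXcC k j]
  have hRherm : ∀ i, (Rm i)ᴴ = Rm i := by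
    intro i
    rw [hRm]
    simp only
    have hstar : star (fun j => Xc i j) = fun j => Xc i j := by
      funext j
      show star (Xc i j) = Xc i j
      exact Complex.conj_ofReal (X i j)
    rw [Matrix.conjTranspose_mul, Matrix.conjTranspose_mul,
      Matrix.conjTranspose_conjTranspose, Matrix.diagonal_conjTranspose, hstar]
    noncomm_ring
  have trMD : ∀ (A : Matrix (Fin d) (Fin d) ℂ) (f : Fin d → ℂ),
      (A * Matrix.diagonal f).trace = ∑ k, A k k * f k := by
    intro A f
    simp [Matrix.trace, Matrix.mul_diagonal]
  have trCDC : ∀ f : Fin d → ℂ, (C * Matrix.diagonal f * Cᴴ).trace = ∑ j, f j := by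
    intro f
    rw [Matrix.trace_mul_cycle, hCC, Matrix.one_mul, Matrix.trace_diagonal]
  have trRR : ∀ i k, (Rm i * Rm k).trace = Yc i k := by
    intro i k
    have e : Rm i * Rm k
        = C * (Matrix.diagonal (fun j => Xc i j) * Matrix.diagonal (fun j => Xc k j)) * Cᴴ := by
      rw [hRm]
      simp only
      have expand : C * Matrix.diagonal (fun j => Xc i j) * Cᴴ
            * (C * Matrix.diagonal (fun j => Xc k j) * Cᴴ)
          = C * Matrix.diagonal (fun j => Xc i j) * (Cᴴ * C)
            * (Matrix.diagonal (fun j => Xc k j) * Cᴴ) := by noncomm_ring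
      rw [expand, hCC]
      noncomm_ring
    rw [e, Matrix.diagonal_mul_diagonal, trCDC, hYcmul]
  -- hR → Y * Y = Y
  have hRtoYY : (∀ i, Rm i = Matrix.diagonal (fun k => Yc i k)) → Y * Y = Y := by
    intro hR
    ext i k
    have hc : ∑ l, Yc i l * Yc k l = Yc i k := by
      have t1 := trRR i k
      rw [hR i, hR k, Matrix.diagonal_mul_diagonal, Matrix.trace_diagonal] at t1
      exact t1
    have hcr : ∑ l, Y i l * Y k l = Y i k := by
      have hcast : ((∑ l, Y i l * Y k l : ℝ) : ℂ) = ((Y i k : ℝ) : ℂ) := by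
        push_cast
        calc ∑ l, ((Y i l : ℝ) : ℂ) * ((Y k l : ℝ) : ℂ)
            = ∑ l, Yc i l * Yc k l :=
              Finset.sum_congr rfl fun l _ => by rw [hYcY i l, hYcY k l]
          _ = Yc i k := hc
          _ = ((Y i k : ℝ) : ℂ) := hYcY i k
      exact_mod_cast hcast
    calc (Y * Y) i k = ∑ l, Y i l * Y l k := Matrix.mul_apply
      _ = ∑ l, Y i l * Y k l := Finset.sum_congr rfl fun l _ => by rw [hYsym l k]
      _ = Y i k := hcr
  -- Y * Y = Y → hR
  have hYYtoR : Y * Y = Y → ∀ i, Rm i = Matrix.diagonal (fun k => Yc i k) := by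
    intro hYY i
    set D : Matrix (Fin d) (Fin d) ℂ := Matrix.diagonal (fun k => Yc i k) with hD
    have hDherm : Dᴴ = D := by
      rw [hD, Matrix.diagonal_conjTranspose]
      have hst : (star fun k => Yc i k) = fun k => Yc i k := by
        funext k
        show star (Yc i k) = Yc i k
        rw [hYcY i k]
        exact Complex.conj_ofReal (Y i k)
      rw [hst]
    have hs : ∑ k, Yc i k * Yc i k = Yc i i := by
      have hr : ∑ k, Y i k * Y i k = Y i i := by
        calc ∑ k, Y i k * Y i k = ∑ k, Y i k * Y k i :=
              Finset.sum_congr rfl fun k _ => by rw [hYsym k i]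
          _ = (Y * Y) i i := (Matrix.mul_apply).symm
          _ = Y i i := by rw [hYY]
      have hcast : ∑ k, Yc i k * Yc i k = ((∑ k, Y i k * Y i k : ℝ) : ℂ) := by
        push_cast
        exact Finset.sum_congr rfl fun k _ => by rw [hYcY i k]
      rw [hcast, hr, ← hYcY i i]
    set G : Matrix (Fin d) (Fin d) ℂ := Rm i - D with hG
    have hGherm : Gᴴ = G := by rw [hG, Matrix.conjTranspose_sub, hRherm i, hDherm]
    have htrG : (G * Gᴴ).trace = 0 := by
      rw [hGherm, hG]
      have expand : (Rm i - D) * (Rm i - D)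
          = Rm i * Rm i - Rm i * D - D * Rm i + D * D := by noncomm_ring
      rw [expand]
      have t2 : (Rm i * D).trace = ∑ k, Yc i k * Yc i k := by
        rw [hD, trMD]
        exact Finset.sum_congr rfl fun k _ => by rw [hRdiag i k]
      have t3 : (D * Rm i).trace = ∑ k, Yc i k * Yc i k := by
        rw [Matrix.trace_mul_comm]
        exact t2
      have t4 : (D * D).trace = ∑ k, Yc i k * Yc i k := by
        rw [hD, Matrix.diagonal_mul_diagonal, Matrix.trace_diagonal]
      rw [Matrix.trace_add, Matrix.trace_sub, Matrix.trace_sub, trRR i i, t2, t3, t4, hs]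
      ring
    have hzero := eq_zero_of_trace_mul_conjTranspose G htrG
    rw [hG] at hzero
    exact sub_eq_zero.mp hzero
  refine ⟨⟨hlower, hupper⟩, ?_, ?_⟩
  · -- trace = 0 → commute
    intro ht M
    have hYY : Y * Y = Y := by
      rw [hYdef]
      exact cgpYYeq_of_trace_zero X hXnn hrow hcol
        (fun B A h => trace_conj_nonneg B A h)
        (fun M h => eq_zero_of_trace_transpose_mul_self M h)
        (by rw [← hYdef]; exact ht)
    have hR := hYYtoR hYY
    apply cgpConjCancel (cgpV v) (cgpVVh hv)
    rw [cgpTildeDephase hv, cgpTildeDephaseRot hv hU, cgpTildeDephaseRot hv hU,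
      cgpTildeDephase hv]
    set Mt : Matrix (Fin d) (Fin d) ℂ := (cgpV v)ᴴ * M * cgpV v with hMt
    set p : Fin d → ℂ := fun i => Mt i i with hp
    have lhsdiag : ∀ i,
        (C * Matrix.diagonal (fun j => (Cᴴ * Mt * C) j j) * Cᴴ) i i = ∑ k, Yc i k * p k := by
      intro i
      rw [cgpCDCh]
      have e1 : ∑ j, (Cᴴ * Mt * C) j j * (C i j * (starRingEnd ℂ) (C i j))
          = ∑ j, Xc i j * (Cᴴ * Mt * C) j j :=
        Finset.sum_congr rfl fun j _ => by rw [← hXcC i j]; ring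
      rw [e1, ← cgpTraceDiagMul]
      have e3 : (Matrix.diagonal (fun j => Xc i j) * (Cᴴ * Mt * C)).trace
          = (Rm i * Mt).trace := by
        rw [hRm]
        simp only
        calc (Matrix.diagonal (fun j => Xc i j) * (Cᴴ * Mt * C)).trace
            = ((Cᴴ * Mt * C) * Matrix.diagonal (fun j => Xc i j)).trace :=
              Matrix.trace_mul_comm _ _
          _ = ((Cᴴ * Mt) * (C * Matrix.diagonal (fun j => Xc i j))).trace := by
              congr 1; noncomm_ring
          _ = ((C * Matrix.diagonal (fun j => Xc i j)) * (Cᴴ * Mt)).trace :=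
              Matrix.trace_mul_comm _ _
          _ = (C * Matrix.diagonal (fun j => Xc i j) * Cᴴ * Mt).trace := by
              congr 1; noncomm_ring
      rw [e3, hR i, cgpTraceDiagMul]
    have rhs : C * Matrix.diagonal (fun j => (Cᴴ * Matrix.diagonal p * C) j j) * Cᴴ
        = Matrix.diagonal (fun i => ∑ k, Yc i k * p k) := by
      have e5 : (fun j => (Cᴴ * Matrix.diagonal p * C) j j)
          = fun j => ∑ k, p k * Xc k j := by
        funext j
        rw [cgpChDC]
        exact Finset.sum_congr rfl fun k _ => by rw [hXcC k j]; ring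
      rw [e5, cgpDiagOfSum p (fun k j => Xc k j), Matrix.mul_sum, Matrix.sum_mul]
      have e6 : ∀ k, (C * (p k • Matrix.diagonal (fun j => Xc k j))) * Cᴴ
          = p k • Matrix.diagonal (fun l => Yc k l) := by
        intro k
        rw [Matrix.mul_smul, Matrix.smul_mul, ← hR k, hRm]
      simp only [e6]
      rw [← cgpDiagOfSum p (fun k l => Yc k l)]
      have efun : (fun j => ∑ k, p k * Yc k j) = fun i => ∑ k, Yc i k * p k := by
        funext j
        refine Finset.sum_congr rfl fun k _ => ?_
        have hsw : Yc k j = Yc j k := by rw [hYcY k j, hYcY j k, hYsym k j]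
        rw [hsw]; ring
      rw [efun]
    rw [rhs]
    exact congrArg Matrix.diagonal (funext fun i => lhsdiag i)
  · -- commute → trace = 0
    intro hcomm
    have hR : ∀ k, Rm k = Matrix.diagonal (fun i => Yc k i) := by
      intro k
      have h := congrArg (fun (M : Matrix (Fin d) (Fin d) ℂ) => (cgpV v)ᴴ * M * cgpV v)
        (hcomm (rankOneProj v k))
      simp only [cgpTildeDephase hv, cgpTildeDephaseRot hv hU, cgpPV hv] at h
      have hq : (fun j => ((Cᴴ * Matrix.diagonal (Pi.single k (1:ℂ)) * C) j j))
          = fun j => Xc k j := by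
        funext j
        rw [cgpChDC]
        rw [Finset.sum_eq_single k]
        · rw [Pi.single_eq_same, hXcC k j]; ring
        · intro b _ hb
          rw [Pi.single_eq_of_ne hb]; ring
        · intro hk; exact absurd (Finset.mem_univ k) hk
      have hdiagE : (fun i => Matrix.diagonal (Pi.single k (1:ℂ)) i i)
          = Pi.single k (1:ℂ) := by
        funext i
        rw [Matrix.diagonal_apply_eq]
      rw [hq, hdiagE, hq] at h
      -- h : diagonal (fun i => (C * diagonal (Xc k ·) * Cᴴ) i i) = C * diagonal (Xc k ·) * Cᴴ
      rw [hRm]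
      simp only
      rw [← h]
      exact congrArg Matrix.diagonal (funext fun i => hRdiag k i)
    have hYY : Y * Y = Y := hRtoYY (fun i => hR i)
    have htr : (Y * (1 - Y)).trace = Y.trace - (Y * Y).trace := by
      rw [Matrix.mul_sub, Matrix.mul_one, Matrix.trace_sub]
    rw [htr, hYY, sub_self]
end
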